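/- Let A(x) = Ai(−x) and for d ∈ ℕ set A_d = {α_ℓ, β_ℓ : ℓ = 0,…,d} where α_ℓ(z) = z^ℓ A(z), β_ℓ(z) = z^ℓ A'(z). Then the operator u ↦ −u'' − z·u is a linear bijection from span(A_d \ {α₀}) onto span(A_d \ {β_d}). -/

import Mathlib

open Submodule Set Module

namespace Stmt9Aux

noncomputable def Lop (u : ℝ → ℝ) : ℝ → ℝ := fun z => -deriv (deriv u) z - z * u z
def Diff2 (f : ℝ → ℝ) : Prop := Differentiable ℝ f ∧ Differentiable ℝ (deriv f)
def af (A : ℝ → ℝ) (ℓ : ℕ) : ℝ → ℝ := fun z => z ^ ℓ * A z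
def bf (A' : ℝ → ℝ) (ℓ : ℕ) : ℝ → ℝ := fun z => z ^ ℓ * A' z

lemma deriv_fun_add {f g : ℝ → ℝ} (hf : Differentiable ℝ f) (hg : Differentiable ℝ g) :
    deriv (f + g) = deriv f + deriv g := by
  funext z
  exact deriv_add (hf z) (hg z)

lemma deriv_fun_smul (c : ℝ) {f : ℝ → ℝ} (hf : Differentiable ℝ f) :
    deriv (c • f) = c • deriv f := by
  funext z
  exact deriv_const_smul c (hf z)

lemma Diff2.add {f g : ℝ → ℝ} (hf : Diff2 f) (hg : Diff2 g) : Diff2 (f + g) :=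
  ⟨hf.1.add hg.1, by rw [deriv_fun_add hf.1 hg.1]; exact hf.2.add hg.2⟩

lemma Diff2.const_smul (c : ℝ) {f : ℝ → ℝ} (hf : Diff2 f) : Diff2 (c • f) :=
  ⟨hf.1.const_smul c, by rw [deriv_fun_smul c hf.1]; exact hf.2.const_smul c⟩

lemma Diff2_zero : Diff2 (0 : ℝ → ℝ) := by
  constructor
  · exact differentiable_const 0
  · have : deriv (0 : ℝ → ℝ) = 0 := by
      funext z; exact deriv_const z 0
    rw [this]; exact differentiable_const 0

lemma Lop_add {f g : ℝ → ℝ} (hf : Diff2 f) (hg : Diff2 g) :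
    Lop (f + g) = Lop f + Lop g := by
  funext z
  have h1 : deriv (f + g) = deriv f + deriv g := deriv_fun_add hf.1 hg.1
  have h2 : deriv (deriv f + deriv g) z = deriv (deriv f) z + deriv (deriv g) z :=
    deriv_add (hf.2 z) (hg.2 z)
  simp only [Lop, Pi.add_apply, h1, h2]
  ring

lemma Lop_smul (c : ℝ) {f : ℝ → ℝ} (hf : Diff2 f) :
    Lop (c • f) = c • Lop f := by
  funext z
  have h1 : deriv (c • f) = c • deriv f := deriv_fun_smul c hf.1
  have h2 : deriv (c • deriv f) z = c • deriv (deriv f) z := deriv_const_smul c (hf.2 z)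
  simp only [Lop, Pi.smul_apply, h1, h2, smul_eq_mul]
  ring

lemma Lop_zero : Lop (0 : ℝ → ℝ) = 0 := by
  funext z
  have : deriv (0 : ℝ → ℝ) = 0 := by funext w; exact deriv_const w 0
  simp only [Lop, this, Pi.zero_apply]
  ring

lemma Diff2_sum {ι : Type*} (s : Finset ι) (g : ι → ℝ → ℝ)
    (hg : ∀ i ∈ s, Diff2 (g i)) : Diff2 (∑ i ∈ s, g i) := by
  classical
  induction s using Finset.induction with
  | empty => simpa using Diff2_zero
  | insert _ _ hx ih =>
    rw [Finset.sum_insert hx]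
    exact (hg _ (Finset.mem_insert_self _ _)).add
      (ih fun i hi => hg i (Finset.mem_insert_of_mem hi))

lemma Lop_sum {ι : Type*} (s : Finset ι) (g : ι → ℝ → ℝ)
    (hg : ∀ i ∈ s, Diff2 (g i)) :
    Lop (∑ i ∈ s, g i) = ∑ i ∈ s, Lop (g i) := by
  classical
  induction s using Finset.induction with
  | empty => simpa using Lop_zero
  | insert _ _ hx ih =>
    rw [Finset.sum_insert hx, Finset.sum_insert hx,
      Lop_add (hg _ (Finset.mem_insert_self _ _))
        (Diff2_sum _ _ fun i hi => hg i (Finset.mem_insert_of_mem hi)),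
      ih fun i hi => hg i (Finset.mem_insert_of_mem hi)]

lemma Lop_combo {ι : Type*} [Fintype ι] (c : ι → ℝ) (g : ι → ℝ → ℝ)
    (hg : ∀ i, Diff2 (g i)) :
    Lop (∑ i, c i • g i) = ∑ i, c i • Lop (g i) := by
  rw [Lop_sum _ _ fun i _ => (hg i).const_smul (c i)]
  exact Finset.sum_congr rfl fun i _ => Lop_smul (c i) (hg i)

variable {A A' : ℝ → ℝ}

lemma hasDerivAt_af (hA : ∀ z, HasDerivAt A (A' z) z) (ℓ : ℕ) (z : ℝ) :
    HasDerivAt (af A ℓ) ((ℓ : ℝ) * z ^ (ℓ - 1) * A z + z ^ ℓ * A' z) z :=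
  (hasDerivAt_pow ℓ z).mul (hA z)

lemma deriv_af (hA : ∀ z, HasDerivAt A (A' z) z) (ℓ : ℕ) :
    deriv (af A ℓ) = fun z => (ℓ : ℝ) * z ^ (ℓ - 1) * A z + z ^ ℓ * A' z :=
  funext fun z => (hasDerivAt_af hA ℓ z).deriv

lemma hasDerivAt_deriv_af (hA : ∀ z, HasDerivAt A (A' z) z)
    (hA' : ∀ z, HasDerivAt A' (-(z * A z)) z) (ℓ : ℕ) (z : ℝ) :
    HasDerivAt (fun z => (ℓ : ℝ) * z ^ (ℓ - 1) * A z + z ^ ℓ * A' z)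
      ((ℓ : ℝ) * (((ℓ - 1 : ℕ) : ℝ) * z ^ (ℓ - 1 - 1)) * A z + (ℓ : ℝ) * z ^ (ℓ - 1) * A' z
        + ((ℓ : ℝ) * z ^ (ℓ - 1) * A' z + z ^ ℓ * (-(z * A z)))) z :=
  ((((hasDerivAt_pow (ℓ - 1) z).const_mul (ℓ : ℝ)).mul (hA z)).add
    ((hasDerivAt_pow ℓ z).mul (hA' z)))

lemma Diff2_af (hA : ∀ z, HasDerivAt A (A' z) z)
    (hA' : ∀ z, HasDerivAt A' (-(z * A z)) z) (ℓ : ℕ) : Diff2 (af A ℓ) := by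
  refine ⟨fun z => (hasDerivAt_af hA ℓ z).differentiableAt, ?_⟩
  rw [deriv_af hA ℓ]
  exact fun z => (hasDerivAt_deriv_af hA hA' ℓ z).differentiableAt

lemma Lop_af (hA : ∀ z, HasDerivAt A (A' z) z)
    (hA' : ∀ z, HasDerivAt A' (-(z * A z)) z) (ℓ : ℕ) :
    Lop (af A ℓ) = (-((ℓ : ℝ) * ((ℓ - 1 : ℕ) : ℝ))) • af A (ℓ - 2)
      + (-(2 * (ℓ : ℝ))) • bf A' (ℓ - 1) := by
  funext z
  have h1 : deriv (deriv (af A ℓ)) z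
      = (ℓ : ℝ) * (((ℓ - 1 : ℕ) : ℝ) * z ^ (ℓ - 1 - 1)) * A z + (ℓ : ℝ) * z ^ (ℓ - 1) * A' z
        + ((ℓ : ℝ) * z ^ (ℓ - 1) * A' z + z ^ ℓ * (-(z * A z))) := by
    rw [deriv_af hA ℓ]
    exact (hasDerivAt_deriv_af hA hA' ℓ z).deriv
  have h2 : ℓ - 1 - 1 = ℓ - 2 := by omega
  simp only [Lop, Pi.add_apply, Pi.smul_apply, smul_eq_mul, af, bf, h1, h2]
  ring

lemma hasDerivAt_bf (hA' : ∀ z, HasDerivAt A' (-(z * A z)) z) (ℓ : ℕ) (z : ℝ) :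
    HasDerivAt (bf A' ℓ) ((ℓ : ℝ) * z ^ (ℓ - 1) * A' z + z ^ ℓ * (-(z * A z))) z :=
  (hasDerivAt_pow ℓ z).mul (hA' z)

lemma deriv_bf (hA' : ∀ z, HasDerivAt A' (-(z * A z)) z) (ℓ : ℕ) :
    deriv (bf A' ℓ) = fun z => (ℓ : ℝ) * z ^ (ℓ - 1) * A' z + z ^ ℓ * (-(z * A z)) :=
  funext fun z => (hasDerivAt_bf hA' ℓ z).deriv

lemma hasDerivAt_deriv_bf (hA : ∀ z, HasDerivAt A (A' z) z)
    (hA' : ∀ z, HasDerivAt A' (-(z * A z)) z) (ℓ : ℕ) (z : ℝ) :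
    HasDerivAt (fun z => (ℓ : ℝ) * z ^ (ℓ - 1) * A' z + z ^ ℓ * (-(z * A z)))
      ((ℓ : ℝ) * (((ℓ - 1 : ℕ) : ℝ) * z ^ (ℓ - 1 - 1)) * A' z
          + (ℓ : ℝ) * z ^ (ℓ - 1) * (-(z * A z))
        + ((ℓ : ℝ) * z ^ (ℓ - 1) * (-(z * A z))
          + z ^ ℓ * (-(1 * A z + z * A' z)))) z := by
  have hzA : HasDerivAt (fun z => -(z * A z)) (-(1 * A z + z * A' z)) z :=
    ((hasDerivAt_id z).mul (hA z)).neg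
  exact ((((hasDerivAt_pow (ℓ - 1) z).const_mul (ℓ : ℝ)).mul (hA' z)).add
    ((hasDerivAt_pow ℓ z).mul hzA))

lemma Diff2_bf (hA : ∀ z, HasDerivAt A (A' z) z)
    (hA' : ∀ z, HasDerivAt A' (-(z * A z)) z) (ℓ : ℕ) : Diff2 (bf A' ℓ) := by
  refine ⟨fun z => (hasDerivAt_bf hA' ℓ z).differentiableAt, ?_⟩
  rw [deriv_bf hA' ℓ]
  exact fun z => (hasDerivAt_deriv_bf hA hA' ℓ z).differentiableAt

lemma Lop_bf (hA : ∀ z, HasDerivAt A (A' z) z)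
    (hA' : ∀ z, HasDerivAt A' (-(z * A z)) z) (ℓ : ℕ) :
    Lop (bf A' ℓ) = (2 * (ℓ : ℝ) + 1) • af A ℓ
      + (-((ℓ : ℝ) * ((ℓ - 1 : ℕ) : ℝ))) • bf A' (ℓ - 2) := by
  funext z
  have h1 : deriv (deriv (bf A' ℓ)) z
      = (ℓ : ℝ) * (((ℓ - 1 : ℕ) : ℝ) * z ^ (ℓ - 1 - 1)) * A' z
          + (ℓ : ℝ) * z ^ (ℓ - 1) * (-(z * A z))
        + ((ℓ : ℝ) * z ^ (ℓ - 1) * (-(z * A z))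
          + z ^ ℓ * (-(1 * A z + z * A' z))) := by
    rw [deriv_bf hA' ℓ]
    exact (hasDerivAt_deriv_bf hA hA' ℓ z).deriv
  have h2 : ℓ - 1 - 1 = ℓ - 2 := by omega
  simp only [Lop, Pi.add_apply, Pi.smul_apply, smul_eq_mul, af, bf, h1, h2]
  rcases ℓ with _ | m
  · norm_num
  · simp only [Nat.add_sub_cancel]
    push_cast
    ring

mutual
noncomputable def Pa (A A' : ℝ → ℝ) : ℕ → ℝ → ℝ
  | 0 => bf A' 0
  | 1 => (3 : ℝ)⁻¹ • bf A' 1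
  | (n + 2) => ((2 * ((n : ℝ) + 2) + 1))⁻¹ •
      (bf A' (n + 2) + (((n + 2) * (n + 1) : ℕ) : ℝ) • Pb A A' n)
termination_by ℓ => 2 * ℓ + 1
decreasing_by omega
noncomputable def Pb (A A' : ℝ → ℝ) : ℕ → ℝ → ℝ
  | 0 => (-(2 : ℝ)⁻¹) • af A 1
  | (n + 1) => (-(2 * ((n : ℝ) + 1) + 2)⁻¹) •
      (af A (n + 2) + (((n + 2) * (n + 1) : ℕ) : ℝ) • Pa A A' n)
termination_by ℓ => 2 * ℓ + 2
decreasing_by omega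
end

def Gf (A A' : ℝ → ℝ) (d : ℕ) : Fin d ⊕ Fin (d + 1) → ℝ → ℝ :=
  Sum.elim (fun i => af A (i + 1)) (fun i => bf A' i)

def Hf (A A' : ℝ → ℝ) (d : ℕ) : Fin (d + 1) ⊕ Fin d → ℝ → ℝ :=
  Sum.elim (fun i => af A i) (fun i => bf A' i)

lemma range_Gf (A A' : ℝ → ℝ) (d : ℕ) :
    Set.range (Gf A A' d) = af A '' Set.Icc 1 d ∪ bf A' '' Set.Icc 0 d := by
  ext f
  constructor
  · rintro ⟨(i | i), rfl⟩
    · exact Or.inl ⟨(i : ℕ) + 1, ⟨by omega, by have := i.isLt; omega⟩, rfl⟩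
    · exact Or.inr ⟨(i : ℕ), ⟨by omega, by have := i.isLt; omega⟩, rfl⟩
  · rintro (⟨ℓ, ⟨h1, h2⟩, rfl⟩ | ⟨ℓ, ⟨h1, h2⟩, rfl⟩)
    · refine ⟨Sum.inl ⟨ℓ - 1, by omega⟩, ?_⟩
      have : ℓ - 1 + 1 = ℓ := by omega
      show af A (ℓ - 1 + 1) = af A ℓ
      rw [this]
    · exact ⟨Sum.inr ⟨ℓ, by omega⟩, rfl⟩

lemma range_Hf (A A' : ℝ → ℝ) (d : ℕ) :
    Set.range (Hf A A' d) = af A '' Set.Icc 0 d ∪ bf A' '' Set.Iio d := by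
  ext f
  constructor
  · rintro ⟨(i | i), rfl⟩
    · exact Or.inl ⟨(i : ℕ), ⟨by omega, by have := i.isLt; omega⟩, rfl⟩
    · exact Or.inr ⟨(i : ℕ), i.isLt, rfl⟩
  · rintro (⟨ℓ, ⟨h1, h2⟩, rfl⟩ | ⟨ℓ, h1, rfl⟩)
    · exact ⟨Sum.inl ⟨ℓ, by omega⟩, rfl⟩
    · exact ⟨Sum.inr ⟨ℓ, h1⟩, rfl⟩

lemma Lop_Gf_mem (hA : ∀ z, HasDerivAt A (A' z) z)
    (hA' : ∀ z, HasDerivAt A' (-(z * A z)) z) (d : ℕ) (k : Fin d ⊕ Fin (d + 1)) :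
    Lop (Gf A A' d k) ∈ span ℝ (Set.range (Hf A A' d)) := by
  rcases k with i | i
  · show Lop (af A ((i : ℕ) + 1)) ∈ _
    rw [Lop_af hA hA' ((i : ℕ) + 1)]
    refine add_mem (smul_mem _ _ (subset_span ?_)) (smul_mem _ _ (subset_span ?_))
    · exact ⟨Sum.inl ⟨(i : ℕ) + 1 - 2, by have := i.isLt; omega⟩, rfl⟩
    · exact ⟨Sum.inr ⟨(i : ℕ) + 1 - 1, by have := i.isLt; omega⟩, rfl⟩
  · show Lop (bf A' (i : ℕ)) ∈ _
    rw [Lop_bf hA hA' (i : ℕ)]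
    by_cases hi2 : 2 ≤ (i : ℕ)
    · refine add_mem (smul_mem _ _ (subset_span ?_)) (smul_mem _ _ (subset_span ?_))
      · exact ⟨Sum.inl ⟨(i : ℕ), i.isLt⟩, rfl⟩
      · exact ⟨Sum.inr ⟨(i : ℕ) - 2, by have := i.isLt; omega⟩, rfl⟩
    · have hc : (-(((i : ℕ) : ℝ) * (((i : ℕ) - 1 : ℕ) : ℝ))) = 0 := by
        have h01 : (i : ℕ) = 0 ∨ (i : ℕ) = 1 := by omega
        rcases h01 with h | h <;> rw [h] <;> norm_num
      rw [hc, zero_smul, add_zero]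
      exact smul_mem _ _ (subset_span ⟨Sum.inl ⟨(i : ℕ), i.isLt⟩, rfl⟩)

lemma Pa0_spec (hA : ∀ z, HasDerivAt A (A' z) z)
    (hA' : ∀ z, HasDerivAt A' (-(z * A z)) z) (d : ℕ) :
    Pa A A' 0 ∈ span ℝ (Set.range (Gf A A' d)) ∧ Diff2 (Pa A A' 0)
      ∧ Lop (Pa A A' 0) = af A 0 := by
  rw [Pa]
  refine ⟨subset_span ⟨Sum.inr ⟨0, by omega⟩, rfl⟩, Diff2_bf hA hA' 0, ?_⟩
  rw [Lop_bf hA hA' 0]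
  norm_num

lemma Pa1_spec (hA : ∀ z, HasDerivAt A (A' z) z)
    (hA' : ∀ z, HasDerivAt A' (-(z * A z)) z) (d : ℕ) (hd : 1 ≤ d) :
    Pa A A' 1 ∈ span ℝ (Set.range (Gf A A' d)) ∧ Diff2 (Pa A A' 1)
      ∧ Lop (Pa A A' 1) = af A 1 := by
  rw [Pa]
  refine ⟨smul_mem _ _ (subset_span ⟨Sum.inr ⟨1, by omega⟩, rfl⟩),
    (Diff2_bf hA hA' 1).const_smul _, ?_⟩
  rw [Lop_smul _ (Diff2_bf hA hA' 1), Lop_bf hA hA' 1]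
  funext z
  simp only [Pi.smul_apply, Pi.add_apply, smul_eq_mul, af, bf]
  norm_num
  try ring

lemma Pb0_spec (hA : ∀ z, HasDerivAt A (A' z) z)
    (hA' : ∀ z, HasDerivAt A' (-(z * A z)) z) (d : ℕ) (hd : 1 ≤ d) :
    Pb A A' 0 ∈ span ℝ (Set.range (Gf A A' d)) ∧ Diff2 (Pb A A' 0)
      ∧ Lop (Pb A A' 0) = bf A' 0 := by
  rw [Pb]
  refine ⟨smul_mem _ _ (subset_span ⟨Sum.inl ⟨0, by omega⟩, rfl⟩),
    (Diff2_af hA hA' 1).const_smul _, ?_⟩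
  rw [Lop_smul _ (Diff2_af hA hA' 1), Lop_af hA hA' 1]
  funext z
  simp only [Pi.smul_apply, Pi.add_apply, smul_eq_mul, af, bf]
  norm_num
  try ring

lemma Pa_succ_spec (hA : ∀ z, HasDerivAt A (A' z) z)
    (hA' : ∀ z, HasDerivAt A' (-(z * A z)) z) (d n : ℕ) (hn : n + 2 ≤ d)
    (hPb : Pb A A' n ∈ span ℝ (Set.range (Gf A A' d)) ∧ Diff2 (Pb A A' n)
      ∧ Lop (Pb A A' n) = bf A' n) :
    Pa A A' (n + 2) ∈ span ℝ (Set.range (Gf A A' d)) ∧ Diff2 (Pa A A' (n + 2))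
      ∧ Lop (Pa A A' (n + 2)) = af A (n + 2) := by
  obtain ⟨hm1, hd1, hL1⟩ := hPb
  rw [Pa]
  refine ⟨smul_mem _ _ (add_mem (subset_span ⟨Sum.inr ⟨n + 2, by omega⟩, rfl⟩)
      (smul_mem _ _ hm1)),
    ((Diff2_bf hA hA' (n + 2)).add (hd1.const_smul _)).const_smul _, ?_⟩
  rw [Lop_smul _ ((Diff2_bf hA hA' (n + 2)).add (hd1.const_smul _)),
    Lop_add (Diff2_bf hA hA' (n + 2)) (hd1.const_smul _),
    Lop_smul _ hd1, hL1, Lop_bf hA hA' (n + 2)]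
  have e1 : n + 2 - 2 = n := by omega
  have e2 : n + 2 - 1 = n + 1 := by omega
  rw [e1, e2]
  have hne : (2 * ((n : ℝ) + 2) + 1) ≠ 0 := by positivity
  funext z
  simp only [Pi.smul_apply, Pi.add_apply, smul_eq_mul, af, bf]
  push_cast
  field_simp
  try ring

lemma Pb_succ_spec (hA : ∀ z, HasDerivAt A (A' z) z)
    (hA' : ∀ z, HasDerivAt A' (-(z * A z)) z) (d m : ℕ) (hm : m + 2 ≤ d)
    (hPa : Pa A A' m ∈ span ℝ (Set.range (Gf A A' d)) ∧ Diff2 (Pa A A' m)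
      ∧ Lop (Pa A A' m) = af A m) :
    Pb A A' (m + 1) ∈ span ℝ (Set.range (Gf A A' d)) ∧ Diff2 (Pb A A' (m + 1))
      ∧ Lop (Pb A A' (m + 1)) = bf A' (m + 1) := by
  obtain ⟨hm1, hd1, hL1⟩ := hPa
  rw [Pb]
  refine ⟨smul_mem _ _ (add_mem (subset_span ⟨Sum.inl ⟨m + 1, by omega⟩, rfl⟩)
      (smul_mem _ _ hm1)),
    ((Diff2_af hA hA' (m + 2)).add (hd1.const_smul _)).const_smul _, ?_⟩
  rw [Lop_smul _ ((Diff2_af hA hA' (m + 2)).add (hd1.const_smul _)),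
    Lop_add (Diff2_af hA hA' (m + 2)) (hd1.const_smul _),
    Lop_smul _ hd1, hL1, Lop_af hA hA' (m + 2)]
  have e1 : m + 2 - 2 = m := by omega
  have e2 : m + 2 - 1 = m + 1 := by omega
  rw [e1, e2]
  have hne : (2 * ((m : ℝ) + 1) + 2) ≠ 0 := by positivity
  funext z
  simp only [Pi.smul_apply, Pi.add_apply, smul_eq_mul, af, bf]
  push_cast
  field_simp
  ring

lemma P_spec (hA : ∀ z, HasDerivAt A (A' z) z)
    (hA' : ∀ z, HasDerivAt A' (-(z * A z)) z) (d : ℕ) : ∀ ℓ : ℕ,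
    (ℓ ≤ d → Pa A A' ℓ ∈ span ℝ (Set.range (Gf A A' d)) ∧ Diff2 (Pa A A' ℓ)
      ∧ Lop (Pa A A' ℓ) = af A ℓ)
    ∧ (ℓ + 1 ≤ d → Pb A A' ℓ ∈ span ℝ (Set.range (Gf A A' d)) ∧ Diff2 (Pb A A' ℓ)
      ∧ Lop (Pb A A' ℓ) = bf A' ℓ) := by
  intro ℓ
  induction ℓ using Nat.strong_induction_on with
  | _ ℓ ih =>
    constructor
    · intro hld
      match ℓ, ih, hld with
      | 0, ih, hld => exact Pa0_spec hA hA' d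
      | 1, ih, hld => exact Pa1_spec hA hA' d hld
      | (n + 2), ih, hld =>
        exact Pa_succ_spec hA hA' d n hld ((ih n (by omega)).2 (by omega))
    · intro hld
      match ℓ, ih, hld with
      | 0, ih, hld => exact Pb0_spec hA hA' d hld
      | (m + 1), ih, hld =>
        exact Pb_succ_spec hA hA' d m hld ((ih m (by omega)).1 (by omega))

theorem main (A A' : ℝ → ℝ) (hA : ∀ z, HasDerivAt A (A' z) z)
    (hA' : ∀ z, HasDerivAt A' (-(z * A z)) z) (d : ℕ)
    (hLI : LinearIndependent ℝ
      (Sum.elim (fun i : Fin (d + 1) => af A (i : ℕ)) (fun i : Fin (d + 1) => bf A' (i : ℕ)))) :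
    Set.BijOn Lop
      (Submodule.span ℝ (af A '' Set.Icc 1 d ∪ bf A' '' Set.Icc 0 d) : Set (ℝ → ℝ))
      (Submodule.span ℝ (af A '' Set.Icc 0 d ∪ bf A' '' Set.Iio d) : Set (ℝ → ℝ)) := by
  rw [← range_Gf A A' d, ← range_Hf A A' d]
  have hdiffG : ∀ k, Diff2 (Gf A A' d k) := by
    rintro (i | i)
    · exact Diff2_af hA hA' _
    · exact Diff2_bf hA hA' _
  -- linear independence of the target family
  have hLI_H : LinearIndependent ℝ (Hf A A' d) := by
    have he : Function.Injective
        (Sum.map (id : Fin (d + 1) → Fin (d + 1)) (Fin.castLE (by omega : d ≤ d + 1))) :=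
      Function.Injective.sumMap (fun a b h => h) (Fin.castLE_injective _)
    have h2 := hLI.comp _ he
    have h3 : (Sum.elim (fun i : Fin (d + 1) => af A (i : ℕ))
          (fun i : Fin (d + 1) => bf A' (i : ℕ)))
        ∘ (Sum.map (id : Fin (d + 1) → Fin (d + 1)) (Fin.castLE (by omega : d ≤ d + 1)))
        = Hf A A' d := by
      funext k
      cases k <;> rfl
    rwa [h3] at h2
  set LG : Fin d ⊕ Fin (d + 1) → ℝ → ℝ := fun k => Lop (Gf A A' d k) with hLGdef
  have hspan_le1 : span ℝ (Set.range LG) ≤ span ℝ (Set.range (Hf A A' d)) := by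
    rw [span_le]
    rintro _ ⟨k, rfl⟩
    exact Lop_Gf_mem hA hA' d k
  have hLu : ∀ (c : Fin d ⊕ Fin (d + 1) → ℝ),
      Lop (∑ i, c i • Gf A A' d i) = ∑ i, c i • LG i := fun c =>
    Lop_combo c _ hdiffG
  have hP := P_spec hA hA' d
  set P : Fin (d + 1) ⊕ Fin d → ℝ → ℝ :=
    Sum.elim (fun i => Pa A A' (i : ℕ)) (fun j => Pb A A' (j : ℕ)) with hPdef
  have hPspec : ∀ k, P k ∈ span ℝ (Set.range (Gf A A' d)) ∧ Diff2 (P k)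
      ∧ Lop (P k) = Hf A A' d k := by
    rintro (i | j)
    · exact (hP (i : ℕ)).1 (by have := i.isLt; omega)
    · exact (hP (j : ℕ)).2 (by have := j.isLt; omega)
  have hspan_le2 : span ℝ (Set.range (Hf A A' d)) ≤ span ℝ (Set.range LG) := by
    rw [span_le]
    rintro _ ⟨k, rfl⟩
    obtain ⟨hm, hdf, hL⟩ := hPspec k
    obtain ⟨c, hc⟩ := (mem_span_range_iff_exists_fun ℝ).mp hm
    rw [← hL, ← hc, hLu c]
    exact sum_mem fun i _ => smul_mem _ _ (subset_span ⟨i, rfl⟩)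
  have hLI_LG : LinearIndependent ℝ LG := by
    rw [linearIndependent_iff_card_eq_finrank_span]
    unfold Set.finrank
    have hle1 : finrank ℝ (span ℝ (Set.range LG)) ≤ Fintype.card (Fin d ⊕ Fin (d + 1)) := by
      have := finrank_range_le_card (R := ℝ) LG
      unfold Set.finrank at this
      exact this
    have hcardH : finrank ℝ (span ℝ (Set.range (Hf A A' d)))
        = Fintype.card (Fin (d + 1) ⊕ Fin d) := finrank_span_eq_card hLI_H
    haveI : Module.Finite ℝ (span ℝ (Set.range LG)) :=
      FiniteDimensional.span_of_finite ℝ (Set.finite_range LG)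
    have hge : finrank ℝ (span ℝ (Set.range (Hf A A' d)))
        ≤ finrank ℝ (span ℝ (Set.range LG)) := Submodule.finrank_mono hspan_le2
    have hc1 : Fintype.card (Fin d ⊕ Fin (d + 1)) = 2 * d + 1 := by
      simp [Fintype.card_sum]; omega
    have hc2 : Fintype.card (Fin (d + 1) ⊕ Fin d) = 2 * d + 1 := by
      simp [Fintype.card_sum]; omega
    omega
  refine ⟨?_, ?_, ?_⟩
  · -- MapsTo
    intro u hu
    have hu' : u ∈ span ℝ (Set.range (Gf A A' d)) := hu
    obtain ⟨c, hc⟩ := (mem_span_range_iff_exists_fun ℝ).mp hu'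
    show Lop u ∈ _
    rw [← hc, hLu c]
    exact hspan_le1 (sum_mem fun i _ => smul_mem _ _ (subset_span ⟨i, rfl⟩))
  · -- InjOn
    intro u hu v hv huv
    obtain ⟨c, hc⟩ := (mem_span_range_iff_exists_fun ℝ).mp
      (show u ∈ span ℝ (Set.range (Gf A A' d)) from hu)
    obtain ⟨c', hc'⟩ := (mem_span_range_iff_exists_fun ℝ).mp
      (show v ∈ span ℝ (Set.range (Gf A A' d)) from hv)
    have huv' : Lop u = Lop v := huv
    have h1 : ∑ i, c i • LG i = ∑ i, c' i • LG i := by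
      rw [← hLu c, ← hLu c', hc, hc', huv']
    have h2 : ∑ i, (c i - c' i) • LG i = 0 := by
      simp only [sub_smul]
      rw [Finset.sum_sub_distrib, h1, sub_self]
    have h3 := Fintype.linearIndependent_iff.mp hLI_LG (fun i => c i - c' i) h2
    have hcc : c = c' := funext fun i => sub_eq_zero.mp (h3 i)
    rw [← hc, ← hc', hcc]
  · -- SurjOn
    intro v hv
    obtain ⟨e, he⟩ := (mem_span_range_iff_exists_fun ℝ).mp
      (show v ∈ span ℝ (Set.range (Hf A A' d)) from hv)
    refine ⟨∑ k, e k • P k, ?_, ?_⟩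
    · exact sum_mem fun k _ => smul_mem _ _ (hPspec k).1
    · show Lop _ = v
      rw [Lop_combo e P fun k => (hPspec k).2.1, ← he]
      exact Finset.sum_congr rfl fun k _ => by rw [(hPspec k).2.2]

end Stmt9Aux

/-- With `A` the flipped Airy function (`A'' = −z A`), `α_ℓ(z) = z^ℓ A(z)`,
`β_ℓ(z) = z^ℓ A'(z)`, and `A_d = {α_ℓ, β_ℓ : ℓ ≤ d}` a linearly independent family,
the operator `u ↦ −u'' − z u` is a bijection from `span(A_d \ {α₀})`
onto `span(A_d \ {β_d})`. -/
theorem stmt9 (A A' : ℝ → ℝ)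
    (hA : ∀ z, HasDerivAt A (A' z) z)
    (hA' : ∀ z, HasDerivAt A' (-(z * A z)) z)
    (d : ℕ) (α β : ℕ → ℝ → ℝ)
    (hα : α = fun ℓ => fun z : ℝ => z ^ ℓ * A z)
    (hβ : β = fun ℓ => fun z : ℝ => z ^ ℓ * A' z)
    (hLI : LinearIndependent ℝ
      (Sum.elim (fun i : Fin (d + 1) => α i) (fun i : Fin (d + 1) => β i))) :
    Set.BijOn (fun u : ℝ → ℝ => fun z => -deriv (deriv u) z - z * u z)
      (Submodule.span ℝ (α '' Set.Icc 1 d ∪ β '' Set.Icc 0 d) : Set (ℝ → ℝ))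
      (Submodule.span ℝ (α '' Set.Icc 0 d ∪ β '' Set.Iio d) : Set (ℝ → ℝ)) := by
  subst hα
  subst hβ
  exact Stmt9Aux.main A A' hA hA' d hLI
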